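/- Let λ̂₁ > λ̂₂ > λ̂₃ > λ̂₄ be reals with λ̂₁+λ̂₂+λ̂₃+λ̂₄ = 0, and set c₃ = 2(λ̂₁+λ̂₂), c₂ = 2(λ̂₁+λ̂₃), c₁ = 2|λ̂₁+λ̂₄|. Then for every x ∈ [0, c₁], ∫_{0}^{∞} x·y·( p(x−c₁, y−c₃) − p(x−c₁, y−c₂) ) dy = ((c₃² − c₂²)/64) · x · (x − c₁)², and for every x ≥ c₁ the same integral equals 0. -/

import Mathlib

open MeasureTheory

/-- The piecewise-polynomial density `p(r,s)`. -/
noncomputable def pDen (r s : ℝ) : ℝ :=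
  if 0 ≤ s ∧ s ≤ -r then (r + s) ^ 2 / 64
  else if r ≤ s ∧ s ≤ 0 then (r ^ 2 + 2 * r * s - s ^ 2) / 64
  else if s ≤ r ∧ r ≤ 0 then r ^ 2 / 32
  else 0

lemma pDen_of_nonneg (r s : ℝ) (hr : 0 ≤ r) : pDen r s = 0 := by
  unfold pDen; split_ifs with h1 h2 h3
  · have h : r + s = 0 := by linarith [h1.1, h1.2]
    rw [h]; norm_num
  · have hr0 : r = 0 := le_antisymm (by linarith [h2.1, h2.2]) hr
    have hs0 : s = 0 := by subst hr0; linarith [h2.1, h2.2]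
    subst hr0; subst hs0; norm_num
  · have h : r = 0 := le_antisymm h3.2 hr
    rw [h]; norm_num
  · rfl

lemma pDen_left (r s : ℝ) (hr : r ≤ 0) (hs : s ≤ r) : pDen r s = r ^ 2 / 32 := by
  unfold pDen; split_ifs with h1 h2 h3
  · have hs0 : s = 0 := le_antisymm (le_trans hs hr) h1.1
    have hr0 : r = 0 := le_antisymm hr (hs0 ▸ hs)
    subst hr0; subst hs0; norm_num
  · have h : s = r := le_antisymm hs h2.1
    subst h; ring
  · rfl
  · exact absurd ⟨hs, hr⟩ h3

lemma pDen_mid (r s : ℝ) (h1 : r ≤ s) (h2 : s ≤ 0) :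
    pDen r s = (r ^ 2 + 2 * r * s - s ^ 2) / 64 := by
  unfold pDen; split_ifs with ha hb hc
  · have h : s = 0 := le_antisymm h2 ha.1
    subst h; ring
  · rfl
  · exact absurd ⟨h1, h2⟩ hb
  · exact absurd ⟨h1, h2⟩ hb

lemma pDen_right (r s : ℝ) (h1 : 0 ≤ s) (h2 : s ≤ -r) : pDen r s = (r + s) ^ 2 / 64 := by
  unfold pDen; split_ifs with ha hb hc <;> first | rfl | exact absurd ⟨h1, h2⟩ ha

lemma pDen_zero (r s : ℝ) (h : -r ≤ s) : pDen r s = 0 := by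
  unfold pDen; split_ifs with h1 h2 h3
  · have hrs : r + s = 0 := by linarith [h1.2]
    rw [hrs]; norm_num
  · have hr0 : r = 0 := by linarith [h2.1, h2.2]
    have hs0 : s = 0 := by subst hr0; simp at h; linarith [h2.2]
    subst hr0; subst hs0; norm_num
  · have hr0 : r = 0 := by linarith [h3.1, h3.2]
    rw [hr0]; norm_num
  · rfl

lemma hasDerivAt_quartic (A B C D y : ℝ) :
    HasDerivAt (fun y : ℝ => A * y ^ 4 / 4 + B * y ^ 3 / 3 + C * y ^ 2 / 2 + D * y)
      (A * y ^ 3 + B * y ^ 2 + C * y + D) y := by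
  have h1 := (hasDerivAt_pow 4 y).const_mul (A / 4)
  have h2 := (hasDerivAt_pow 3 y).const_mul (B / 3)
  have h3 := (hasDerivAt_pow 2 y).const_mul (C / 2)
  have h4 := (hasDerivAt_id y).const_mul D
  convert ((h1.add h2).add h3).add h4 using 1
  · rfl
  · rfl
  · ext z; simp [id]; ring
  · push_cast; ring

lemma integral_cubic (A B C D a b : ℝ) :
    ∫ y in a..b, (A * y ^ 3 + B * y ^ 2 + C * y + D) =
      (A * b ^ 4 / 4 + B * b ^ 3 / 3 + C * b ^ 2 / 2 + D * b)
      - (A * a ^ 4 / 4 + B * a ^ 3 / 3 + C * a ^ 2 / 2 + D * a) := by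
  exact intervalIntegral.integral_eq_sub_of_hasDerivAt
    (fun y _ => hasDerivAt_quartic A B C D y)
    ((Continuous.intervalIntegrable (by fun_prop) a b))

lemma pDen_key (r c : ℝ) (hr : r ≤ 0) (hrc : -r ≤ c) :
    IntegrableOn (fun y => y * pDen r (y - c)) (Set.Ici 0) volume ∧
    ∫ y in Set.Ici (0 : ℝ), y * pDen r (y - c)
      = c ^ 2 * r ^ 2 / 64 + r ^ 4 / 384 := by
  set f : ℝ → ℝ := fun y => y * pDen r (y - c) with hf
  have h0cr : (0:ℝ) ≤ c + r := by linarith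
  have hcrc : c + r ≤ c := by linarith
  have hcT : c ≤ c - r := by linarith
  have hT : (0:ℝ) ≤ c - r := by linarith
  have e1 : Set.EqOn f (fun y => 0 * y ^ 3 + 0 * y ^ 2 + (r ^ 2 / 32) * y + 0)
      (Set.uIcc 0 (c + r)) := by
    intro y hy
    rw [Set.uIcc_of_le h0cr] at hy
    simp only [hf]
    rw [pDen_left r (y - c) hr (by linarith [hy.2])]; ring
  have e2 : Set.EqOn f (fun y => (-1/64) * y ^ 3 + ((2*r + 2*c)/64) * y ^ 2
      + ((r^2 - 2*r*c - c^2)/64) * y + 0) (Set.uIcc (c + r) c) := by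
    intro y hy
    rw [Set.uIcc_of_le hcrc] at hy
    simp only [hf]
    rw [pDen_mid r (y - c) (by linarith [hy.1]) (by linarith [hy.2])]; ring
  have e3 : Set.EqOn f (fun y => (1/64) * y ^ 3 + (2*(r - c)/64) * y ^ 2
      + ((r - c)^2/64) * y + 0) (Set.uIcc c (c - r)) := by
    intro y hy
    rw [Set.uIcc_of_le hcT] at hy
    simp only [hf]
    rw [pDen_right r (y - c) (by linarith [hy.1]) (by linarith [hy.2])]; ring
  have ii : ∀ (a b : ℝ) (g : ℝ → ℝ), Continuous g → Set.EqOn f g (Set.uIcc a b) →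
      IntervalIntegrable f volume a b := by
    intro a b g hg he
    rw [intervalIntegrable_iff]
    refine (integrableOn_congr_fun (fun y hy => he (Set.Ioc_subset_Icc_self hy))
      measurableSet_uIoc).mpr ?_
    exact (hg.intervalIntegrable a b).def'
  have i1 : IntervalIntegrable f volume 0 (c + r) := ii _ _ _ (by fun_prop) e1
  have i2 : IntervalIntegrable f volume (c + r) c := ii _ _ _ (by fun_prop) e2
  have i3 : IntervalIntegrable f volume c (c - r) := ii _ _ _ (by fun_prop) e3
  have i123 : IntervalIntegrable f volume 0 (c - r) := (i1.trans i2).trans i3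
  have hIoiZero : ∀ y ∈ Set.Ioi (c - r), f y = 0 := by
    intro y hy
    simp only [hf]
    rw [pDen_zero r (y - c) (by simp only [Set.mem_Ioi] at hy; linarith)]; ring
  have hIoi : IntegrableOn f (Set.Ioi (c - r)) volume :=
    (integrableOn_congr_fun hIoiZero measurableSet_Ioi).mpr (integrableOn_zero)
  have hIcc : IntegrableOn f (Set.Icc 0 (c - r)) volume := by
    rw [integrableOn_Icc_iff_integrableOn_Ioc]
    exact (intervalIntegrable_iff_integrableOn_Ioc_of_le hT).mp i123
  have hIci : IntegrableOn f (Set.Ici 0) volume := by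
    rw [← Set.Icc_union_Ioi_eq_Ici hT]
    exact hIcc.union hIoi
  refine ⟨hIci, ?_⟩
  have hdisj : Disjoint (Set.Icc (0:ℝ) (c - r)) (Set.Ioi (c - r)) := by
    apply Set.disjoint_left.mpr
    intro y hy hy'
    exact absurd hy.2 (not_le.mpr hy')
  calc ∫ y in Set.Ici (0:ℝ), f y
      = ∫ y in Set.Icc 0 (c - r) ∪ Set.Ioi (c - r), f y := by
        rw [Set.Icc_union_Ioi_eq_Ici hT]
    _ = (∫ y in Set.Icc (0:ℝ) (c - r), f y) + ∫ y in Set.Ioi (c - r), f y := by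
        rw [setIntegral_union hdisj measurableSet_Ioi hIcc hIoi]
    _ = (∫ y in Set.Icc (0:ℝ) (c - r), f y) := by
        rw [setIntegral_congr_fun measurableSet_Ioi hIoiZero]; simp
    _ = ∫ y in (0:ℝ)..(c - r), f y := by
        rw [integral_Icc_eq_integral_Ioc, intervalIntegral.integral_of_le hT]
    _ = (∫ y in (0:ℝ)..(c + r), f y) + (∫ y in (c + r)..c, f y)
        + ∫ y in c..(c - r), f y := by
        rw [← intervalIntegral.integral_add_adjacent_intervals (i1.trans i2) i3,
          ← intervalIntegral.integral_add_adjacent_intervals i1 i2]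
    _ = c ^ 2 * r ^ 2 / 64 + r ^ 4 / 384 := by
        rw [intervalIntegral.integral_congr e1, intervalIntegral.integral_congr e2,
          intervalIntegral.integral_congr e3, integral_cubic, integral_cubic,
          integral_cubic]
        ring

theorem integral_I1 (l1 l2 l3 l4 : ℝ) (h12 : l2 < l1) (h23 : l3 < l2) (h34 : l4 < l3)
    (hsum : l1 + l2 + l3 + l4 = 0)
    (c1 c2 c3 : ℝ) (hc3 : c3 = 2 * (l1 + l2)) (hc2 : c2 = 2 * (l1 + l3))
    (hc1 : c1 = 2 * |l1 + l4|) :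
    (∀ x : ℝ, 0 ≤ x → x ≤ c1 →
      (∫ y in Set.Ici (0 : ℝ), x * y * (pDen (x - c1) (y - c3) - pDen (x - c1) (y - c2)))
        = (c3 ^ 2 - c2 ^ 2) / 64 * x * (x - c1) ^ 2) ∧
    (∀ x : ℝ, c1 ≤ x →
      (∫ y in Set.Ici (0 : ℝ), x * y * (pDen (x - c1) (y - c3) - pDen (x - c1) (y - c2)))
        = 0) := by
  have hc1c2 : c1 ≤ c2 := by
    rcases abs_cases (l1 + l4) with ⟨h, _⟩ | ⟨h, _⟩ <;> rw [hc1, hc2, h] <;> linarith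
  have hc2c3 : c2 ≤ c3 := by rw [hc2, hc3]; linarith
  constructor
  · intro x hx0 hx1
    set r := x - c1 with hrdef
    have hr : r ≤ 0 := by simp [hrdef]; linarith
    have hrc2 : -r ≤ c2 := by simp [hrdef]; linarith
    have hrc3 : -r ≤ c3 := by simp [hrdef]; linarith
    have k2 := pDen_key r c2 hr hrc2
    have k3 := pDen_key r c3 hr hrc3
    calc ∫ y in Set.Ici (0:ℝ), x * y * (pDen r (y - c3) - pDen r (y - c2))
        = ∫ y in Set.Ici (0:ℝ), x * (y * pDen r (y - c3) - y * pDen r (y - c2)) := by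
          congr 1; ext y; ring
      _ = x * ∫ y in Set.Ici (0:ℝ), (y * pDen r (y - c3) - y * pDen r (y - c2)) := by
          rw [integral_const_mul]
      _ = x * ((∫ y in Set.Ici (0:ℝ), y * pDen r (y - c3))
            - ∫ y in Set.Ici (0:ℝ), y * pDen r (y - c2)) := by
          rw [integral_sub k3.1 k2.1]
      _ = (c3 ^ 2 - c2 ^ 2) / 64 * x * r ^ 2 := by
          rw [k3.2, k2.2]; ring
  · intro x hx
    have hr : (0:ℝ) ≤ x - c1 := by linarith
    have : ∀ y : ℝ, x * y * (pDen (x - c1) (y - c3) - pDen (x - c1) (y - c2)) = 0 := by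
      intro y
      rw [pDen_of_nonneg _ _ hr, pDen_of_nonneg _ _ hr]; ring
    simp only [this, integral_zero]
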